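/- The relation ≤ on isomorphism classes of mixed graphs of order n and size m, defined by [G] ≤ [H] iff H is isomorphic to G or to a graph obtained from G by a finite sequence of Kelmans transformations, is a partial order (reflexive, transitive, and antisymmetric). -/

import Mathlib

attribute [local instance] Classical.propDecidable

/-- The spectral radius of a real square matrix: the maximum of the complex moduli
of its eigenvalues (roots of the characteristic polynomial over ℂ). -/
noncomputable def specRad {m : Type*} [Fintype m] [DecidableEq m] (M : Matrix m m ℝ) : ℝ :=
  sSup {r : ℝ | ∃ μ : ℂ, (M.map (fun x => (x : ℂ))).charpoly.IsRoot μ ∧ r = ‖μ‖}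

/-- The `A_α` matrix `α D⁺ + (1-α) A` of a mixed graph given by its adjacency matrix `A`,
where `D⁺` is the diagonal out-degree matrix. -/
noncomputable def Aalpha {n : ℕ} (α : ℝ) (A : Matrix (Fin n) (Fin n) ℝ) :
    Matrix (Fin n) (Fin n) ℝ :=
  α • Matrix.diagonal (fun i => ∑ j, A i j) + (1 - α) • A

/-- The Kelmans transformation of a mixed graph (given by its 0-1 adjacency matrix)
from `b` to `a`. -/
noncomputable def kelmansG {n : ℕ} (A : Matrix (Fin n) (Fin n) ℝ) (a b : Fin n) :
    Matrix (Fin n) (Fin n) ℝ :=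
  Matrix.of fun i j =>
    if i ≠ a ∧ i ≠ b ∧ j = a then max (A i a) (A i b)
    else if i ≠ a ∧ i ≠ b ∧ j = b then min (A i a) (A i b)
    else if i = a ∧ j ≠ a ∧ j ≠ b then max (A a j) (A b j)
    else if i = b ∧ j ≠ a ∧ j ≠ b then min (A a j) (A b j)
    else A i j

/-- `A` is the adjacency matrix of a mixed graph: a 0-1 matrix with zero diagonal. -/
def IsMixedAdj {n : ℕ} (A : Matrix (Fin n) (Fin n) ℝ) : Prop :=
  (∀ i j, A i j = 0 ∨ A i j = 1) ∧ ∀ i, A i i = 0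

/-- The underlying simple graph of a mixed graph: forget orientations. -/
def underlying {n : ℕ} (A : Matrix (Fin n) (Fin n) ℝ) : SimpleGraph (Fin n) where
  Adj u v := u ≠ v ∧ (A u v = 1 ∨ A v u = 1)
  symm := ⟨fun u v ⟨h1, h2⟩ => ⟨h1.symm, h2.symm⟩⟩
  loopless := ⟨fun u h => h.1 rfl⟩

/-- The graph of undirected edges of a mixed graph (delete all arcs). -/
def undirPart {n : ℕ} (A : Matrix (Fin n) (Fin n) ℝ) : SimpleGraph (Fin n) where
  Adj u v := u ≠ v ∧ A u v = 1 ∧ A v u = 1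
  symm := ⟨fun u v ⟨h1, h2, h3⟩ => ⟨h1.symm, h3, h2⟩⟩
  loopless := ⟨fun u h => h.1 rfl⟩

/-- Isomorphism of mixed graphs given by adjacency matrices. -/
def MixedIso {n : ℕ} (A B : Matrix (Fin n) (Fin n) ℝ) : Prop :=
  ∃ e : Equiv.Perm (Fin n), ∀ u v, A u v = B (e u) (e v)

/-- A single Kelmans transformation step, applied at a pair of distinct vertices with
no arc between them. -/
def KelmansStep {n : ℕ} (A B : Matrix (Fin n) (Fin n) ℝ) : Prop :=
  ∃ a b : Fin n, a ≠ b ∧ A a b = A b a ∧ B = kelmansG A a b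

/-- The relation `[G] ≤ [H]`: `H` is isomorphic to `G`, or to a graph obtained from `G`
by a finite sequence of Kelmans transformations. -/
def KelmansLe {n : ℕ} (A B : Matrix (Fin n) (Fin n) ℝ) : Prop :=
  ∃ C, Relation.ReflTransGen KelmansStep A C ∧ MixedIso C B

section KelmansAux

open Finset

variable {n : ℕ}

/-! ### Basic facts about `MixedIso` -/

lemma mixedIso_refl (A : Matrix (Fin n) (Fin n) ℝ) : MixedIso A A :=
  ⟨Equiv.refl _, fun _ _ => rfl⟩

lemma mixedIso_trans {A B C : Matrix (Fin n) (Fin n) ℝ}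
    (h1 : MixedIso A B) (h2 : MixedIso B C) : MixedIso A C := by
  obtain ⟨e, he⟩ := h1
  obtain ⟨f, hf⟩ := h2
  exact ⟨e.trans f, fun u v => by rw [he, hf]; rfl⟩

/-! ### Entry computations for `kelmansG` -/

variable {A : Matrix (Fin n) (Fin n) ℝ} {a b : Fin n}

lemma kg_aa (hab : a ≠ b) : kelmansG A a b a a = A a a := by
  simp [kelmansG, hab]

lemma kg_bb (hab : a ≠ b) : kelmansG A a b b b = A b b := by
  simp [kelmansG, hab, hab.symm]

lemma kg_ab (hab : a ≠ b) : kelmansG A a b a b = A a b := by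
  simp [kelmansG, hab, hab.symm]

lemma kg_ba (hab : a ≠ b) : kelmansG A a b b a = A b a := by
  simp [kelmansG, hab, hab.symm]

lemma kg_row_a (hab : a ≠ b) {j : Fin n} (hja : j ≠ a) (hjb : j ≠ b) :
    kelmansG A a b a j = max (A a j) (A b j) := by
  simp [kelmansG, hab, hja, hjb, hja.symm, hjb.symm]

lemma kg_row_b (hab : a ≠ b) {j : Fin n} (hja : j ≠ a) (hjb : j ≠ b) :
    kelmansG A a b b j = min (A a j) (A b j) := by
  simp [kelmansG, hab, hab.symm, hja, hjb, hja.symm, hjb.symm]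

lemma kg_col_a {i : Fin n} (hia : i ≠ a) (hib : i ≠ b) :
    kelmansG A a b i a = max (A i a) (A i b) := by
  simp [kelmansG, hia, hib]

lemma kg_col_b (hab : a ≠ b) {i : Fin n} (hia : i ≠ a) (hib : i ≠ b) :
    kelmansG A a b i b = min (A i a) (A i b) := by
  simp [kelmansG, hab, hab.symm, hia, hib]

lemma kg_mid {i j : Fin n} (hia : i ≠ a) (hib : i ≠ b) (hja : j ≠ a) (hjb : j ≠ b) :
    kelmansG A a b i j = A i j := by
  simp [kelmansG, hia, hib, hja, hjb]

end KelmansAux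

/-! ### Transporting Kelmans steps across isomorphisms -/

lemma kelmansStep_transport {n : ℕ} {A B B' : Matrix (Fin n) (Fin n) ℝ}
    (hiso : MixedIso A B) (h : KelmansStep B B') :
    ∃ A', KelmansStep A A' ∧ MixedIso A' B' := by
  obtain ⟨e, he⟩ := hiso
  obtain ⟨a, b, hab, hsym, rfl⟩ := h
  refine ⟨kelmansG A (e.symm a) (e.symm b),
    ⟨e.symm a, e.symm b, fun hc => hab (e.symm.injective hc), ?_, rfl⟩, e, ?_⟩
  · simp [he, Equiv.apply_symm_apply, hsym]
  · intro u v
    simp only [kelmansG, Matrix.of_apply, he, Equiv.apply_symm_apply, ne_eq,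
      Equiv.apply_eq_iff_eq_symm_apply]

lemma kelmans_chain_transport {n : ℕ} {A B C : Matrix (Fin n) (Fin n) ℝ}
    (hiso : MixedIso A B) (h : Relation.ReflTransGen KelmansStep B C) :
    ∃ C', Relation.ReflTransGen KelmansStep A C' ∧ MixedIso C' C := by
  induction h with
  | refl => exact ⟨A, Relation.ReflTransGen.refl, hiso⟩
  | tail _ hstep ih =>
      obtain ⟨C', hchain, hiso'⟩ := ih
      obtain ⟨C'', hstep', hiso''⟩ := kelmansStep_transport hiso' hstep
      exact ⟨C'', hchain.tail hstep', hiso''⟩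

/-! ### `kelmansG` preserves `IsMixedAdj` -/

lemma kelmansG_isMixedAdj {n : ℕ} {A : Matrix (Fin n) (Fin n) ℝ} (hA : IsMixedAdj A)
    (a b : Fin n) (hab : a ≠ b) : IsMixedAdj (kelmansG A a b) := by
  constructor
  · intro i j
    have h01 : ∀ u v : Fin n, kelmansG A a b i j = A u v ∨
        kelmansG A a b i j = max (A u v) (A i j) → True := fun _ _ _ => trivial
    rcases hA.1 i a with hia | hia <;> rcases hA.1 i b with hib | hib <;>
      rcases hA.1 a j with haj | haj <;> rcases hA.1 b j with hbj | hbj <;>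
      rcases hA.1 i j with hij | hij <;>
      · simp only [kelmansG, Matrix.of_apply]
        split_ifs <;> simp [hia, hib, haj, hbj, hij]
  · intro i
    by_cases hia : i = a
    · subst hia; rw [kg_aa hab]; exact hA.2 _
    by_cases hib : i = b
    · subst hib; rw [kg_bb hab]; exact hA.2 _
    · rw [kg_mid hia hib hia hib]; exact hA.2 i

lemma chain_isMixedAdj {n : ℕ} {A C : Matrix (Fin n) (Fin n) ℝ} (hA : IsMixedAdj A)
    (h : Relation.ReflTransGen KelmansStep A C) : IsMixedAdj C := by
  induction h with
  | refl => exact hA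
  | tail _ hstep ih =>
      obtain ⟨a, b, hab, _, rfl⟩ := hstep
      exact kelmansG_isMixedAdj ih a b hab

/-! ### The monovariant: sum of squared degrees -/

noncomputable def mdeg {n : ℕ} (A : Matrix (Fin n) (Fin n) ℝ) (i : Fin n) : ℝ :=
  (∑ j, A i j) + ∑ j, A j i

noncomputable def mphi {n : ℕ} (A : Matrix (Fin n) (Fin n) ℝ) : ℝ :=
  ∑ i, (mdeg A i) ^ 2

lemma mphi_iso {n : ℕ} {A B : Matrix (Fin n) (Fin n) ℝ} (h : MixedIso A B) :
    mphi A = mphi B := by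
  obtain ⟨e, he⟩ := h
  have hdeg : ∀ i, mdeg A i = mdeg B (e i) := by
    intro i
    unfold mdeg
    rw [show (∑ j, A i j) = ∑ j, B (e i) (e j) from Finset.sum_congr rfl fun j _ => he i j,
        show (∑ j, A j i) = ∑ j, B (e j) (e i) from Finset.sum_congr rfl fun j _ => he j i,
        Equiv.sum_comp e (fun j => B (e i) j), Equiv.sum_comp e (fun j => B j (e i))]
  unfold mphi
  rw [show (∑ i, (mdeg A i) ^ 2) = ∑ i, (mdeg B (e i)) ^ 2 from
    Finset.sum_congr rfl fun i _ => by rw [hdeg],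
    Equiv.sum_comp e (fun i => (mdeg B i) ^ 2)]

lemma sum_split {n : ℕ} {a b : Fin n} (hab : a ≠ b) (f : Fin n → ℝ) :
    ∑ j, f j = f a + f b + ∑ j ∈ Finset.univ \ {a, b}, f j := by
  rw [← Finset.sum_sdiff (Finset.subset_univ ({a, b} : Finset (Fin n))),
    Finset.sum_pair hab]
  ring

/-! ### The key lemma: a Kelmans step weakly increases `mphi`, with equality
only up to isomorphism. -/

lemma step_phi {n : ℕ} {A : Matrix (Fin n) (Fin n) ℝ} {a b : Fin n}
    (hd : ∀ i, A i i = 0) (hab : a ≠ b) (hsym : A a b = A b a) :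
    mphi A ≤ mphi (kelmansG A a b) ∧
      (mphi A = mphi (kelmansG A a b) → MixedIso A (kelmansG A a b)) := by
  set B := kelmansG A a b with hBdef
  have kaa : B a a = A a a := kg_aa hab
  have kbb : B b b = A b b := kg_bb hab
  have kab : B a b = A a b := kg_ab hab
  have kba : B b a = A b a := kg_ba hab
  have krowa : ∀ j, j ≠ a → j ≠ b → B a j = max (A a j) (A b j) :=
    fun _ h1 h2 => kg_row_a hab h1 h2
  have krowb : ∀ j, j ≠ a → j ≠ b → B b j = min (A a j) (A b j) :=
    fun _ h1 h2 => kg_row_b hab h1 h2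
  have kcola : ∀ i, i ≠ a → i ≠ b → B i a = max (A i a) (A i b) :=
    fun _ h1 h2 => kg_col_a h1 h2
  have kcolb : ∀ i, i ≠ a → i ≠ b → B i b = min (A i a) (A i b) :=
    fun _ h1 h2 => kg_col_b hab h1 h2
  have kmid : ∀ i j, i ≠ a → i ≠ b → j ≠ a → j ≠ b → B i j = A i j :=
    fun _ _ h1 h2 h3 h4 => kg_mid h1 h2 h3 h4
  set σ := Equiv.swap a b with hσ
  have hσa : σ a = b := Equiv.swap_apply_left a b
  have hσb : σ b = a := Equiv.swap_apply_right a b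
  have hσo : ∀ j, j ≠ a → j ≠ b → σ j = j := fun j hja hjb =>
    Equiv.swap_apply_of_ne_of_ne hja hjb
  -- pointwise inequalities
  have hgea : ∀ j, A a j ≤ B a j := by
    intro j
    by_cases hja : j = a
    · rw [hja, kaa]
    by_cases hjb : j = b
    · rw [hjb, kab]
    · rw [krowa j hja hjb]; exact le_max_left _ _
  have hgea' : ∀ j, A j a ≤ B j a := by
    intro j
    by_cases hja : j = a
    · rw [hja, kaa]
    by_cases hjb : j = b
    · rw [hjb, kba]
    · rw [kcola j hja hjb]; exact le_max_left _ _
  have hgeb : ∀ j, A b (σ j) ≤ B a j := by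
    intro j
    by_cases hja : j = a
    · rw [hja, kaa, hσa, hd, hd]
    by_cases hjb : j = b
    · rw [hjb, kab, hσb, ← hsym]
    · rw [krowa j hja hjb, hσo j hja hjb]; exact le_max_right _ _
  have hgeb' : ∀ j, A (σ j) b ≤ B j a := by
    intro j
    by_cases hja : j = a
    · rw [hja, kaa, hσa, hd, hd]
    by_cases hjb : j = b
    · rw [hjb, kba, hσb, hsym]
    · rw [kcola j hja hjb, hσo j hja hjb]; exact le_max_right _ _
  -- pairwise sums preserved
  have hprow : ∀ j, B a j + B b j = A a j + A b j := by
    intro j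
    by_cases hja : j = a
    · rw [hja, kaa, kba]
    by_cases hjb : j = b
    · rw [hjb, kab, kbb]
    · rw [krowa j hja hjb, krowb j hja hjb]; exact max_add_min _ _
  have hpcol : ∀ j, B j a + B j b = A j a + A j b := by
    intro j
    by_cases hja : j = a
    · rw [hja, kaa, kab]
    by_cases hjb : j = b
    · rw [hjb, kba, kbb]
    · rw [kcola j hja hjb, kcolb j hja hjb]; exact max_add_min _ _
  -- other degrees are unchanged
  have hdeg_other : ∀ i, i ≠ a → i ≠ b → mdeg B i = mdeg A i := by
    intro i hia hib
    unfold mdeg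
    have h1 : ∑ j, B i j = ∑ j, A i j := by
      rw [sum_split hab (fun j => B i j), sum_split hab (fun j => A i j),
        kcola i hia hib, kcolb i hia hib]
      have hmm : (max (A i a) (A i b)) + (min (A i a) (A i b)) = A i a + A i b :=
        max_add_min _ _
      have h2 : ∑ j ∈ Finset.univ \ {a, b}, B i j = ∑ j ∈ Finset.univ \ {a, b}, A i j := by
        refine Finset.sum_congr rfl fun j hj => ?_
        simp only [Finset.mem_sdiff, Finset.mem_insert, Finset.mem_singleton] at hj
        exact kmid i j hia hib (fun h => hj.2 (Or.inl h)) (fun h => hj.2 (Or.inr h))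
      rw [h2]; linarith
    have h1' : ∑ j, B j i = ∑ j, A j i := by
      rw [sum_split hab (fun j => B j i), sum_split hab (fun j => A j i),
        krowa i hia hib, krowb i hia hib]
      have hmm : (max (A a i) (A b i)) + (min (A a i) (A b i)) = A a i + A b i :=
        max_add_min _ _
      have h2 : ∑ j ∈ Finset.univ \ {a, b}, B j i = ∑ j ∈ Finset.univ \ {a, b}, A j i := by
        refine Finset.sum_congr rfl fun j hj => ?_
        simp only [Finset.mem_sdiff, Finset.mem_insert, Finset.mem_singleton] at hj
        exact kmid j i (fun h => hj.2 (Or.inl h)) (fun h => hj.2 (Or.inr h)) hia hib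
      rw [h2]; linarith
    rw [h1, h1']
  -- degree inequalities at a and b
  set x := mdeg A a with hx
  set y := mdeg A b with hy
  set p := mdeg B a with hp
  set q := mdeg B b with hq
  have hpx : x ≤ p :=
    add_le_add (Finset.sum_le_sum fun j _ => hgea j) (Finset.sum_le_sum fun j _ => hgea' j)
  have hpy : y ≤ p := by
    have e1 : (∑ j, A b j) = ∑ j, A b (σ j) := (Equiv.sum_comp σ (fun j => A b j)).symm
    have e2 : (∑ j, A j b) = ∑ j, A (σ j) b := (Equiv.sum_comp σ (fun j => A j b)).symm
    calc y = (∑ j, A b (σ j)) + ∑ j, A (σ j) b := by rw [hy]; unfold mdeg; rw [e1, e2]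
    _ ≤ p := add_le_add (Finset.sum_le_sum fun j _ => hgeb j)
        (Finset.sum_le_sum fun j _ => hgeb' j)
  have hpq : p + q = x + y := by
    have h1 : (∑ j, B a j) + ∑ j, B b j = (∑ j, A a j) + ∑ j, A b j := by
      rw [← Finset.sum_add_distrib, ← Finset.sum_add_distrib]
      exact Finset.sum_congr rfl fun j _ => hprow j
    have h2 : (∑ j, B j a) + ∑ j, B j b = (∑ j, A j a) + ∑ j, A j b := by
      rw [← Finset.sum_add_distrib, ← Finset.sum_add_distrib]
      exact Finset.sum_congr rfl fun j _ => hpcol j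
    simp only [hp, hq, hx, hy]; unfold mdeg; linarith
  -- the phi difference
  have hphi : mphi B - mphi A = 2 * (p - x) * (p - y) := by
    have hsB : mphi B = p ^ 2 + q ^ 2 + ∑ i ∈ Finset.univ \ {a, b}, (mdeg B i) ^ 2 :=
      sum_split hab (fun i => (mdeg B i) ^ 2)
    have hsA : mphi A = x ^ 2 + y ^ 2 + ∑ i ∈ Finset.univ \ {a, b}, (mdeg A i) ^ 2 :=
      sum_split hab (fun i => (mdeg A i) ^ 2)
    have hS : ∑ i ∈ Finset.univ \ {a, b}, (mdeg B i) ^ 2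
        = ∑ i ∈ Finset.univ \ {a, b}, (mdeg A i) ^ 2 := by
      refine Finset.sum_congr rfl fun i hi => ?_
      simp only [Finset.mem_sdiff, Finset.mem_insert, Finset.mem_singleton] at hi
      rw [hdeg_other i (fun h => hi.2 (Or.inl h)) (fun h => hi.2 (Or.inr h))]
    have hqv : q = x + y - p := by linarith
    rw [hsB, hsA, hS, hqv]; ring
  constructor
  · nlinarith [mul_nonneg (sub_nonneg.2 hpx) (sub_nonneg.2 hpy)]
  · intro heq
    have hz : (p - x) * (p - y) = 0 := by nlinarith
    rcases mul_eq_zero.mp hz with hcase | hcase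
    · -- p = x : B = A
      have hpe : p = x := by linarith
      have hterm : ∀ j, A a j + A j a = B a j + B j a := by
        have hle : ∀ j ∈ Finset.univ, A a j + A j a ≤ B a j + B j a :=
          fun j _ => add_le_add (hgea j) (hgea' j)
        have hs : (∑ j, (A a j + A j a)) = ∑ j, (B a j + B j a) := by
          rw [Finset.sum_add_distrib, Finset.sum_add_distrib]
          have hpe' := hpe
          simp only [hp, hx] at hpe'; unfold mdeg at hpe'; linarith
        intro j
        exact (Finset.sum_eq_sum_iff_of_le hle).mp hs j (Finset.mem_univ j)
      have hrow : ∀ j, B a j = A a j := fun j =>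
        le_antisymm (by have := hterm j; have := hgea' j; linarith) (hgea j)
      have hcol : ∀ j, B j a = A j a := fun j =>
        le_antisymm (by have := hterm j; have := hgea j; linarith) (hgea' j)
      have hBA : B = A := by
        ext i j
        by_cases hia : i = a
        · rw [hia]; exact hrow j
        by_cases hja : j = a
        · rw [hja]; exact hcol i
        by_cases hib : i = b
        · by_cases hjb : j = b
          · rw [hib, hjb]; exact kbb
          · have hmax : max (A a j) (A b j) = A a j := by
              rw [← krowa j hja hjb]; exact hrow j
            have hle2 : A b j ≤ A a j := by
              by_contra hc; push_neg at hc
              rw [max_eq_right hc.le] at hmax; exact absurd hmax (ne_of_gt hc)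
            rw [hib, krowb j hja hjb, min_eq_right hle2]
        by_cases hjb : j = b
        · have hmax : max (A i a) (A i b) = A i a := by
            rw [← kcola i hia hib]; exact hcol i
          have hle2 : A i b ≤ A i a := by
            by_contra hc; push_neg at hc
            rw [max_eq_right hc.le] at hmax; exact absurd hmax (ne_of_gt hc)
          rw [hjb, kcolb i hia hib, min_eq_right hle2]
        · exact kmid i j hia hib hja hjb
      rw [hBA]; exact mixedIso_refl A
    · -- p = y : B is A with a and b swapped
      have hpe : p = y := by linarith
      have hterm : ∀ j, A b (σ j) + A (σ j) b = B a j + B j a := by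
        have hle : ∀ j ∈ Finset.univ, A b (σ j) + A (σ j) b ≤ B a j + B j a :=
          fun j _ => add_le_add (hgeb j) (hgeb' j)
        have hs : (∑ j, (A b (σ j) + A (σ j) b)) = ∑ j, (B a j + B j a) := by
          rw [Finset.sum_add_distrib, Finset.sum_add_distrib,
            Equiv.sum_comp σ (fun j => A b j), Equiv.sum_comp σ (fun j => A j b)]
          have hpe' := hpe
          simp only [hp, hy] at hpe'; unfold mdeg at hpe'; linarith
        intro j
        exact (Finset.sum_eq_sum_iff_of_le hle).mp hs j (Finset.mem_univ j)
      have hrow : ∀ j, B a j = A b (σ j) := fun j =>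
        le_antisymm (by have := hterm j; have := hgeb' j; linarith) (hgeb j)
      have hcol : ∀ j, B j a = A (σ j) b := fun j =>
        le_antisymm (by have := hterm j; have := hgeb j; linarith) (hgeb' j)
      have hBA : ∀ u v, B u v = A (σ u) (σ v) := by
        intro u v
        by_cases hua : u = a
        · rw [hua, hrow v, hσa]
        by_cases hva : v = a
        · rw [hva, hcol u, hσa]
        by_cases hub : u = b
        · by_cases hvb : v = b
          · rw [hub, hvb, kbb, hσb, hd, hd]
          · have hmax : max (A a v) (A b v) = A b v := by
              rw [← krowa v hva hvb, hrow v, hσo v hva hvb]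
            have hle2 : A a v ≤ A b v := by
              by_contra hc; push_neg at hc
              rw [max_eq_left hc.le] at hmax; exact absurd hmax.symm (ne_of_lt hc)
            rw [hub, krowb v hva hvb, min_eq_left hle2, hσb, hσo v hva hvb]
        by_cases hvb : v = b
        · have hmax : max (A u a) (A u b) = A u b := by
            rw [← kcola u hua hub, hcol u, hσo u hua hub]
          have hle2 : A u a ≤ A u b := by
            by_contra hc; push_neg at hc
            rw [max_eq_left hc.le] at hmax; exact absurd hmax.symm (ne_of_lt hc)
          rw [hvb, kcolb u hua hub, min_eq_left hle2, hσb, hσo u hua hub]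
        · rw [kmid u v hua hub hva hvb, hσo u hua hub, hσo v hva hvb]
      exact ⟨σ, fun u v => by
        rw [hBA (σ u) (σ v), Equiv.swap_apply_self, Equiv.swap_apply_self]⟩

lemma chain_phi_le {n : ℕ} {A C : Matrix (Fin n) (Fin n) ℝ} (hA : IsMixedAdj A)
    (h : Relation.ReflTransGen KelmansStep A C) : mphi A ≤ mphi C := by
  induction h with
  | refl => exact le_refl _
  | tail hchain hstep ih =>
      obtain ⟨a, b, hab, hsym, rfl⟩ := hstep
      have hD := chain_isMixedAdj hA hchain
      exact le_trans ih (step_phi hD.2 hab hsym).1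

lemma chain_phi_eq_iso {n : ℕ} {A C : Matrix (Fin n) (Fin n) ℝ} (hA : IsMixedAdj A)
    (h : Relation.ReflTransGen KelmansStep A C) (heq : mphi A = mphi C) :
    MixedIso A C := by
  induction h with
  | refl => exact mixedIso_refl A
  | @tail D C hchain hstep ih =>
      obtain ⟨a, b, hab, hsym, rfl⟩ := hstep
      have hD := chain_isMixedAdj hA hchain
      have l1 : mphi A ≤ mphi D := chain_phi_le hA hchain
      have l2 := (step_phi hD.2 hab hsym).1
      have h1 : mphi A = mphi D := le_antisymm l1 (by linarith)
      exact mixedIso_trans (ih h1) ((step_phi hD.2 hab hsym).2 (by linarith))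

/-- The relation `≤` on isomorphism classes of mixed graphs of a given order (and size)
is a partial order: it is reflexive, transitive, and antisymmetric (where equality of
isomorphism classes means the graphs are isomorphic). -/
theorem kelmansLe_partialOrder {n : ℕ} :
    (∀ A : Matrix (Fin n) (Fin n) ℝ, IsMixedAdj A → KelmansLe A A) ∧
    (∀ A B C : Matrix (Fin n) (Fin n) ℝ, IsMixedAdj A → IsMixedAdj B → IsMixedAdj C →
      KelmansLe A B → KelmansLe B C → KelmansLe A C) ∧
    (∀ A B : Matrix (Fin n) (Fin n) ℝ, IsMixedAdj A → IsMixedAdj B →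
      KelmansLe A B → KelmansLe B A → MixedIso A B) := by
  refine ⟨fun A _ => ⟨A, Relation.ReflTransGen.refl, mixedIso_refl A⟩, ?_, ?_⟩
  · rintro A B C _ _ _ ⟨C₁, h1, i1⟩ ⟨C₂, h2, i2⟩
    obtain ⟨C₂', h2', i2'⟩ := kelmans_chain_transport i1 h2
    exact ⟨C₂', h1.trans h2', mixedIso_trans i2' i2⟩
  · rintro A B hA hB ⟨C₁, h1, i1⟩ ⟨C₂, h2, i2⟩
    have e1 : mphi C₁ = mphi B := mphi_iso i1
    have e2 : mphi C₂ = mphi A := mphi_iso i2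
    have l1 : mphi A ≤ mphi C₁ := chain_phi_le hA h1
    have l2 : mphi B ≤ mphi C₂ := chain_phi_le hB h2
    have heq : mphi A = mphi C₁ := le_antisymm l1 (by linarith)
    exact mixedIso_trans (chain_phi_eq_iso hA h1 heq) i1
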